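/- The moving-domain bilinear form b_h satisfies the boundedness estimate |b_h(u, v_h)| ≤ 2 ‖u‖_{h,m,*} ‖v_h‖_{h,m} for all u ∈ V_{0h,*} and v_h ∈ V_{0h}, where ‖v‖²_{h,m,*} = ‖v‖²_{h,m} + (θh)^{-1}‖v‖²_{L²(Q)} + θ²h²‖∂_t ∇_x v‖²_{L²(Q)}. -/

import Mathlib

open scoped RealInnerProductSpace

private lemma cs6 (a1 a2 a3 a4 a5 a6 b1 b2 b3 b4 b5 b6 : ℝ)
    (ha1 : 0 ≤ a1) (ha2 : 0 ≤ a2) (ha3 : 0 ≤ a3) (ha4 : 0 ≤ a4) (ha5 : 0 ≤ a5) (ha6 : 0 ≤ a6)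
    (hb1 : 0 ≤ b1) (hb2 : 0 ≤ b2) (hb3 : 0 ≤ b3) (hb4 : 0 ≤ b4) (hb5 : 0 ≤ b5) (hb6 : 0 ≤ b6) :
    a1*b1 + a2*b2 + a3*b3 + a4*b4 + a5*b5 + a6*b6
      ≤ Real.sqrt (a1^2+a2^2+a3^2+a4^2+a5^2+a6^2) *
        Real.sqrt (b1^2+b2^2+b3^2+b4^2+b5^2+b6^2) := by
  have hid : (a1^2+a2^2+a3^2+a4^2+a5^2+a6^2) * (b1^2+b2^2+b3^2+b4^2+b5^2+b6^2)
      = (a1*b1 + a2*b2 + a3*b3 + a4*b4 + a5*b5 + a6*b6)^2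
        + ((a1*b2-a2*b1)^2 + (a1*b3-a3*b1)^2 + (a1*b4-a4*b1)^2 + (a1*b5-a5*b1)^2
          + (a1*b6-a6*b1)^2 + (a2*b3-a3*b2)^2 + (a2*b4-a4*b2)^2 + (a2*b5-a5*b2)^2
          + (a2*b6-a6*b2)^2 + (a3*b4-a4*b3)^2 + (a3*b5-a5*b3)^2 + (a3*b6-a6*b3)^2
          + (a4*b5-a5*b4)^2 + (a4*b6-a6*b4)^2 + (a5*b6-a6*b5)^2) := by ring
  have hT : 0 ≤ (a1*b2-a2*b1)^2 + (a1*b3-a3*b1)^2 + (a1*b4-a4*b1)^2 + (a1*b5-a5*b1)^2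
      + (a1*b6-a6*b1)^2 + (a2*b3-a3*b2)^2 + (a2*b4-a4*b2)^2 + (a2*b5-a5*b2)^2
      + (a2*b6-a6*b2)^2 + (a3*b4-a4*b3)^2 + (a3*b5-a5*b3)^2 + (a3*b6-a6*b3)^2
      + (a4*b5-a5*b4)^2 + (a4*b6-a6*b4)^2 + (a5*b6-a6*b5)^2 := by positivity
  have hsq : (a1*b1 + a2*b2 + a3*b3 + a4*b4 + a5*b5 + a6*b6)^2
      ≤ (a1^2+a2^2+a3^2+a4^2+a5^2+a6^2) * (b1^2+b2^2+b3^2+b4^2+b5^2+b6^2) := by linarith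
  have hSnn : 0 ≤ a1*b1 + a2*b2 + a3*b3 + a4*b4 + a5*b5 + a6*b6 := by positivity
  calc a1*b1 + a2*b2 + a3*b3 + a4*b4 + a5*b5 + a6*b6
      = Real.sqrt ((a1*b1 + a2*b2 + a3*b3 + a4*b4 + a5*b5 + a6*b6)^2) :=
        (Real.sqrt_sq hSnn).symm
    _ ≤ Real.sqrt ((a1^2+a2^2+a3^2+a4^2+a5^2+a6^2) * (b1^2+b2^2+b3^2+b4^2+b5^2+b6^2)) :=
        Real.sqrt_le_sqrt hsq
    _ = _ := Real.sqrt_mul (by positivity) _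

set_option maxHeartbeats 1000000 in
/-- Boundedness of the moving-domain bilinear form
`|b_h(u, v_h)| ≤ 2 ‖u‖_{h,m,*} ‖v_h‖_{h,m}`, where
`b_h(u,v) = (∂_t u, v) + θh(∂_t u, ∂_t v) + (∇_x u, ∇_x v) − θh(∂_t∇_x u, ∇_x v)
+ θh(∇_x u, ∇_x v)_{Σ_T}`,
`‖v‖²_{h,m} = ‖∇_x v‖² + θh‖∂_t v‖² + ½‖v‖²_{Σ_T} + θh‖∇_x v‖²_{Σ_T}` and
`‖v‖²_{h,m,*} = ‖v‖²_{h,m} + (θh)⁻¹‖v‖²_{L²(Q)} + θ²h²‖∂_t∇_x v‖²`.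
Here `uQ, vQ` are the functions, `Du, Dv` their time derivatives, `Gu, Gv` their
spatial gradients, `DGu = ∂_t∇_x u`, `uT, vT` traces on `Σ_T`, `GuT, GvT` gradient
traces on `Σ_T`. The hypothesis is the integration-by-parts identity
`(∂_t u, v) = −(u, ∂_t v) + (u, v)_{Σ_T}` (valid since `v_h` vanishes on `Σ ∪ Σ_0`). -/
theorem moving_domain_boundedness
    {H F B Fb : Type*}
    [NormedAddCommGroup H] [InnerProductSpace ℝ H]
    [NormedAddCommGroup F] [InnerProductSpace ℝ F]
    [NormedAddCommGroup B] [InnerProductSpace ℝ B]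
    [NormedAddCommGroup Fb] [InnerProductSpace ℝ Fb]
    (θ h : ℝ) (hθ : 0 < θ) (hh : 0 < h)
    (uQ vQ Du Dv : H) (Gu Gv DGu : F) (uT vT : B) (GuT GvT : Fb)
    (hParts : ⟪Du, vQ⟫ = -⟪uQ, Dv⟫ + ⟪uT, vT⟫) :
    |⟪Du, vQ⟫ + θ * h * ⟪Du, Dv⟫ + ⟪Gu, Gv⟫ - θ * h * ⟪DGu, Gv⟫ + θ * h * ⟪GuT, GvT⟫|
      ≤ 2 *
        Real.sqrt ((‖Gu‖ ^ 2 + θ * h * ‖Du‖ ^ 2 + (1 / 2) * ‖uT‖ ^ 2 + θ * h * ‖GuT‖ ^ 2)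
            + (θ * h)⁻¹ * ‖uQ‖ ^ 2 + θ ^ 2 * h ^ 2 * ‖DGu‖ ^ 2) *
        Real.sqrt (‖Gv‖ ^ 2 + θ * h * ‖Dv‖ ^ 2 + (1 / 2) * ‖vT‖ ^ 2 + θ * h * ‖GvT‖ ^ 2) := by
  have hc : 0 < θ * h := mul_pos hθ hh
  set s := Real.sqrt (θ * h) with hs
  have hspos : 0 < s := Real.sqrt_pos.mpr hc
  have hs2 : s ^ 2 = θ * h := Real.sq_sqrt hc.le
  -- Step 1: triangle inequality + Cauchy–Schwarz termwise
  have h1 := abs_real_inner_le_norm uQ Dv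
  have h2 := abs_real_inner_le_norm uT vT
  have h3 := abs_real_inner_le_norm Du Dv
  have h4 := abs_real_inner_le_norm Gu Gv
  have h5 := abs_real_inner_le_norm DGu Gv
  have h6 := abs_real_inner_le_norm GuT GvT
  have hL : |⟪Du, vQ⟫ + θ * h * ⟪Du, Dv⟫ + ⟪Gu, Gv⟫ - θ * h * ⟪DGu, Gv⟫ + θ * h * ⟪GuT, GvT⟫|
      ≤ ‖uQ‖ * ‖Dv‖ + ‖uT‖ * ‖vT‖ + θ * h * (‖Du‖ * ‖Dv‖) + ‖Gu‖ * ‖Gv‖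
        + θ * h * (‖DGu‖ * ‖Gv‖) + θ * h * (‖GuT‖ * ‖GvT‖) := by
    rw [hParts]
    calc |(-⟪uQ, Dv⟫ + ⟪uT, vT⟫) + θ * h * ⟪Du, Dv⟫ + ⟪Gu, Gv⟫ - θ * h * ⟪DGu, Gv⟫
          + θ * h * ⟪GuT, GvT⟫|
        ≤ |(-⟪uQ, Dv⟫ + ⟪uT, vT⟫) + θ * h * ⟪Du, Dv⟫ + ⟪Gu, Gv⟫ - θ * h * ⟪DGu, Gv⟫|
          + |θ * h * ⟪GuT, GvT⟫| := abs_add_le _ _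
      _ ≤ |(-⟪uQ, Dv⟫ + ⟪uT, vT⟫) + θ * h * ⟪Du, Dv⟫ + ⟪Gu, Gv⟫| + |θ * h * ⟪DGu, Gv⟫|
          + |θ * h * ⟪GuT, GvT⟫| := by gcongr ?_ + _; exact abs_sub _ _
      _ ≤ (|(-⟪uQ, Dv⟫ + ⟪uT, vT⟫) + θ * h * ⟪Du, Dv⟫| + |⟪Gu, Gv⟫|) + |θ * h * ⟪DGu, Gv⟫|
          + |θ * h * ⟪GuT, GvT⟫| := by gcongr ?_ + _ + _; exact abs_add_le _ _
      _ ≤ ((|(-⟪uQ, Dv⟫)| + |⟪uT, vT⟫|) + |θ * h * ⟪Du, Dv⟫| + |⟪Gu, Gv⟫|) + |θ * h * ⟪DGu, Gv⟫|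
          + |θ * h * ⟪GuT, GvT⟫| := by
            gcongr ?_ + _ + _ + _
            exact (abs_add_le _ _).trans (by gcongr ?_ + _; exact abs_add_le _ _)
      _ ≤ ‖uQ‖ * ‖Dv‖ + ‖uT‖ * ‖vT‖ + θ * h * (‖Du‖ * ‖Dv‖) + ‖Gu‖ * ‖Gv‖
          + θ * h * (‖DGu‖ * ‖Gv‖) + θ * h * (‖GuT‖ * ‖GvT‖) := by
            rw [abs_neg]
            simp only [abs_mul, abs_of_pos hθ, abs_of_pos hh]
            have m3 := mul_le_mul_of_nonneg_left h3 hc.le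
            have m5 := mul_le_mul_of_nonneg_left h5 hc.le
            have m6 := mul_le_mul_of_nonneg_left h6 hc.le
            linarith [h1, h2, h4, m3, m5, m6]
  -- Step 2: discrete Cauchy–Schwarz on the six pairs
  have key := cs6 (s⁻¹ * ‖uQ‖) ‖uT‖ (s * ‖Du‖) ‖Gu‖ (s ^ 2 * ‖DGu‖) (s * ‖GuT‖)
      (s * ‖Dv‖) ‖vT‖ (s * ‖Dv‖) ‖Gv‖ ‖Gv‖ (s * ‖GvT‖)
      (by positivity) (norm_nonneg _) (by positivity) (norm_nonneg _) (by positivity)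
      (by positivity) (by positivity) (norm_nonneg _) (by positivity) (norm_nonneg _)
      (norm_nonneg _) (by positivity)
  have hsne : s ≠ 0 := hspos.ne'
  have hprod : s⁻¹ * ‖uQ‖ * (s * ‖Dv‖) = ‖uQ‖ * ‖Dv‖ := by
    field_simp
  -- rewrite squares
  have hA : (s⁻¹ * ‖uQ‖)^2 + ‖uT‖^2 + (s * ‖Du‖)^2 + ‖Gu‖^2 + (s ^ 2 * ‖DGu‖)^2 + (s * ‖GuT‖)^2
      = (θ * h)⁻¹ * ‖uQ‖ ^ 2 + ‖uT‖ ^ 2 + θ * h * ‖Du‖ ^ 2 + ‖Gu‖ ^ 2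
        + θ ^ 2 * h ^ 2 * ‖DGu‖ ^ 2 + θ * h * ‖GuT‖ ^ 2 := by
    have h2 : (s⁻¹)^2 = (θ*h)⁻¹ := by rw [← hs2]; exact (inv_pow s 2)
    linear_combination ‖uQ‖^2 * h2 + (‖Du‖^2 + ‖GuT‖^2 + (s^2 + θ*h) * ‖DGu‖^2) * hs2
  have hB : (s * ‖Dv‖)^2 + ‖vT‖^2 + (s * ‖Dv‖)^2 + ‖Gv‖^2 + ‖Gv‖^2 + (s * ‖GvT‖)^2
      = θ * h * ‖Dv‖ ^ 2 + ‖vT‖ ^ 2 + θ * h * ‖Dv‖ ^ 2 + ‖Gv‖ ^ 2 + ‖Gv‖ ^ 2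
        + θ * h * ‖GvT‖ ^ 2 := by linear_combination (2*‖Dv‖^2 + ‖GvT‖^2) * hs2
  set A := (‖Gu‖ ^ 2 + θ * h * ‖Du‖ ^ 2 + (1 / 2) * ‖uT‖ ^ 2 + θ * h * ‖GuT‖ ^ 2)
      + (θ * h)⁻¹ * ‖uQ‖ ^ 2 + θ ^ 2 * h ^ 2 * ‖DGu‖ ^ 2 with hAdef
  set Bv := ‖Gv‖ ^ 2 + θ * h * ‖Dv‖ ^ 2 + (1 / 2) * ‖vT‖ ^ 2 + θ * h * ‖GvT‖ ^ 2 with hBdef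
  have hAnn : 0 ≤ A := by rw [hAdef]; positivity
  have hBnn : 0 ≤ Bv := by rw [hBdef]; positivity
  have hsqA : Real.sqrt ((s⁻¹ * ‖uQ‖)^2 + ‖uT‖^2 + (s * ‖Du‖)^2 + ‖Gu‖^2
      + (s ^ 2 * ‖DGu‖)^2 + (s * ‖GuT‖)^2) ≤ Real.sqrt (2 * A) := by
    apply Real.sqrt_le_sqrt
    rw [hA, hAdef]
    have n1 : 0 ≤ θ * h * ‖Du‖ ^ 2 := by positivity
    have n2 : 0 ≤ θ * h * ‖GuT‖ ^ 2 := by positivity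
    have n3 : 0 ≤ (θ * h)⁻¹ * ‖uQ‖ ^ 2 := by positivity
    have n4 : 0 ≤ θ ^ 2 * h ^ 2 * ‖DGu‖ ^ 2 := by positivity
    have n5 : 0 ≤ ‖Gu‖ ^ 2 := sq_nonneg _
    linarith
  have hsqB : Real.sqrt ((s * ‖Dv‖)^2 + ‖vT‖^2 + (s * ‖Dv‖)^2 + ‖Gv‖^2 + ‖Gv‖^2
      + (s * ‖GvT‖)^2) ≤ Real.sqrt (2 * Bv) := by
    apply Real.sqrt_le_sqrt
    rw [hB, hBdef]
    have n1 : 0 ≤ θ * h * ‖GvT‖ ^ 2 := by positivity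
    have n2 : 0 ≤ ‖vT‖ ^ 2 := sq_nonneg _
    linarith
  have hfinal : ‖uQ‖ * ‖Dv‖ + ‖uT‖ * ‖vT‖ + θ * h * (‖Du‖ * ‖Dv‖) + ‖Gu‖ * ‖Gv‖
        + θ * h * (‖DGu‖ * ‖Gv‖) + θ * h * (‖GuT‖ * ‖GvT‖)
      ≤ Real.sqrt (2 * A) * Real.sqrt (2 * Bv) := by
    refine le_trans ?_ (mul_le_mul hsqA hsqB (Real.sqrt_nonneg _) (Real.sqrt_nonneg _))
    refine le_trans (le_of_eq ?_) key
    rw [hprod]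
    have e3 : s * ‖Du‖ * (s * ‖Dv‖) = θ * h * (‖Du‖ * ‖Dv‖) := by
      linear_combination ‖Du‖ * ‖Dv‖ * hs2
    have e5 : s ^ 2 * ‖DGu‖ * ‖Gv‖ = θ * h * (‖DGu‖ * ‖Gv‖) := by rw [hs2]; ring
    have e6 : s * ‖GuT‖ * (s * ‖GvT‖) = θ * h * (‖GuT‖ * ‖GvT‖) := by
      linear_combination ‖GuT‖ * ‖GvT‖ * hs2
    rw [e3, e5, e6]
  have h2AB : Real.sqrt (2 * A) * Real.sqrt (2 * Bv) = 2 * Real.sqrt A * Real.sqrt Bv := by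
    rw [Real.sqrt_mul (by norm_num : (0:ℝ) ≤ 2), Real.sqrt_mul (by norm_num : (0:ℝ) ≤ 2)]
    calc Real.sqrt 2 * Real.sqrt A * (Real.sqrt 2 * Real.sqrt Bv)
        = Real.sqrt 2 * Real.sqrt 2 * (Real.sqrt A * Real.sqrt Bv) := by ring
      _ = 2 * Real.sqrt A * Real.sqrt Bv := by
          rw [Real.mul_self_sqrt (by norm_num : (0:ℝ) ≤ 2)]; ring
  calc |⟪Du, vQ⟫ + θ * h * ⟪Du, Dv⟫ + ⟪Gu, Gv⟫ - θ * h * ⟪DGu, Gv⟫ + θ * h * ⟪GuT, GvT⟫|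
      ≤ _ := hL
    _ ≤ Real.sqrt (2 * A) * Real.sqrt (2 * Bv) := hfinal
    _ = 2 * Real.sqrt A * Real.sqrt Bv := h2AB
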